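/- Let A and B be n×n matrices over a field F. Then for every positive integer k, rank((A+B)^k) ≤ k·rank(B) + rank(A^k). -/
import Mathlib

open Matrix

lemma my_rank_add_le {F : Type*} [Field F] {n : ℕ} (A B : Matrix (Fin n) (Fin n) F) :
    (A + B).rank ≤ A.rank + B.rank := by
  have h : LinearMap.range (A + B).mulVecLin ≤
      LinearMap.range A.mulVecLin ⊔ LinearMap.range B.mulVecLin := by
    rintro x ⟨y, rfl⟩
    rw [Matrix.mulVecLin_add]
    exact Submodule.add_mem_sup ⟨y, rfl⟩ ⟨y, rfl⟩
  calc (A + B).rank ≤ Module.finrank F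
        ↥(LinearMap.range A.mulVecLin ⊔ LinearMap.range B.mulVecLin) :=
        Submodule.finrank_mono h
    _ ≤ A.rank + B.rank := Submodule.finrank_add_le_finrank_add_finrank _ _

lemma my_key {F : Type*} [Field F] {n : ℕ} (A B : Matrix (Fin n) (Fin n) F)
    (k : ℕ) (C : Matrix (Fin n) (Fin n) F) :
    ((A + B) ^ k * C).rank ≤ k * B.rank + (A ^ k * C).rank := by
  induction k generalizing C with
  | zero => simp
  | succ k ih =>
    have h1 : (A + B) ^ (k + 1) * C = (A + B) ^ k * (A * C) + (A + B) ^ k * (B * C) := by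
      rw [pow_succ, mul_assoc, add_mul, mul_add]
    rw [h1]
    calc ((A + B) ^ k * (A * C) + (A + B) ^ k * (B * C)).rank
        ≤ ((A + B) ^ k * (A * C)).rank + ((A + B) ^ k * (B * C)).rank :=
          my_rank_add_le _ _
      _ ≤ (k * B.rank + (A ^ k * (A * C)).rank) + (B * C).rank :=
          add_le_add (ih (A * C)) (rank_mul_le_right _ _)
      _ ≤ (k + 1) * B.rank + (A ^ (k + 1) * C).rank := by
          rw [pow_succ, mul_assoc]
          have : (B * C).rank ≤ B.rank := rank_mul_le_left _ _
          ring_nf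
          omega

theorem stmt_1 (F : Type*) [Field F] (n : ℕ) (A B : Matrix (Fin n) (Fin n) F)
    (k : ℕ) (hk : 0 < k) :
    ((A + B) ^ k).rank ≤ k * B.rank + (A ^ k).rank := by
  have := my_key A B k 1
  simpa using this
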